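/- (Multi-layer mapper bound) Let the encoder consist of a first GFN layer with weights W^e ∈ ℝ^{L_1×N_o} followed by P standard layers with weight matrices W^{(1)},…,W^{(P)} and C-Lipschitz activation σ applied after each layer. Under the cross-mesh bound |u(x_i)−u(x_j)| ≤ δ for nearest-neighbour pairs and the mapper bound |map(μ)_i − enc^{M_o→M_o}(u|M_o)_i| ≤ α for all i, one has |map(μ)_i − enc^{M_o→M_n}(u|M_n)_i| ≤ α + δ C^{P+1} ‖W^e‖_∞ Π_{p=1}^P ‖W^{(p)}‖_∞ for all i. -/

import Mathlib

open Finset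
open scoped Classical

/-- `k` is the unique nearest neighbour of `x` among the points of the mesh `M`. -/
def IsNN {X : Type*} [MetricSpace X] (M : Finset X) (x k : X) : Prop :=
  k ∈ M ∧ ∀ m ∈ M, m ≠ k → dist x k < dist x m

/-- `stack σ n W b P v` applies `P` standard feedforward layers (weights `W p`,
biases `b p`, activation `σ` after each layer) to the first-layer output `v`. -/
def stack (σ : ℝ → ℝ) (n : ℕ → ℕ)
    (W : (p : ℕ) → Fin (n (p + 2)) → Fin (n (p + 1)) → ℝ)
    (b : (p : ℕ) → Fin (n (p + 2)) → ℝ) :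
    (P : ℕ) → (Fin (n 1) → ℝ) → Fin (n (P + 1)) → ℝ
  | 0, v => v
  | P + 1, v => fun i => σ (∑ j, W P i j * stack σ n W b P v j + b P i)

lemma stack_lip (σ : ℝ → ℝ) (n : ℕ → ℕ) (hn : ∀ p, 0 < n p)
    (W : (p : ℕ) → Fin (n (p + 2)) → Fin (n (p + 1)) → ℝ)
    (b : (p : ℕ) → Fin (n (p + 2)) → ℝ)
    (C : ℝ) (hC : 0 ≤ C)
    (hLip : ∀ a a', |σ a - σ a'| ≤ C * |a - a'|)
    (D : ℝ) (hD : 0 ≤ D) (P : ℕ) (v v' : Fin (n 1) → ℝ)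
    (hv : ∀ l, |v l - v' l| ≤ D) :
    ∀ i, |stack σ n W b P v i - stack σ n W b P v' i| ≤
      D * ∏ p ∈ Finset.range P,
        (C * Finset.univ.sup'
          (Finset.univ_nonempty_iff.mpr (Fin.pos_iff_nonempty.mp (hn (p + 2))))
          (fun i' => ∑ j, |W p i' j|)) := by
  induction P with
  | zero => intro i; simpa [stack] using hv i
  | succ P ih =>
    intro i
    have hSnn : ∀ p, (0:ℝ) ≤ Finset.univ.sup'
        (Finset.univ_nonempty_iff.mpr (Fin.pos_iff_nonempty.mp (hn (p + 2))))
        (fun i' => ∑ j, |W p i' j|) := fun p =>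
      le_trans (Finset.sum_nonneg fun j _ => abs_nonneg _)
        (Finset.le_sup' (fun i' => ∑ j, |W p i' j|)
          (Finset.mem_univ (⟨0, hn (p+2)⟩ : Fin (n (p+2)))))
    set B := D * ∏ p ∈ Finset.range P,
        (C * Finset.univ.sup'
          (Finset.univ_nonempty_iff.mpr (Fin.pos_iff_nonempty.mp (hn (p + 2))))
          (fun i' => ∑ j, |W p i' j|)) with hB
    have hBnn : (0:ℝ) ≤ B :=
      mul_nonneg hD (Finset.prod_nonneg fun p _ => mul_nonneg hC (hSnn p))
    have hdiff : (∑ j, W P i j * stack σ n W b P v j + b P i) -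
        (∑ j, W P i j * stack σ n W b P v' j + b P i) =
        ∑ j, W P i j * (stack σ n W b P v j - stack σ n W b P v' j) := by
      simp [mul_sub, Finset.sum_sub_distrib]
    have h1 : |stack σ n W b (P+1) v i - stack σ n W b (P+1) v' i| ≤
        C * |∑ j, W P i j * (stack σ n W b P v j - stack σ n W b P v' j)| := by
      show |σ _ - σ _| ≤ _
      refine le_trans (hLip _ _) (le_of_eq ?_)
      rw [hdiff]
    have h2 : |∑ j, W P i j * (stack σ n W b P v j - stack σ n W b P v' j)| ≤
        (∑ j, |W P i j|) * B := by
      refine le_trans (Finset.abs_sum_le_sum_abs _ _) ?_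
      rw [Finset.sum_mul]
      refine Finset.sum_le_sum fun j _ => ?_
      rw [abs_mul]
      exact mul_le_mul_of_nonneg_left (ih j) (abs_nonneg _)
    have h3 : (∑ j, |W P i j|) ≤ Finset.univ.sup'
        (Finset.univ_nonempty_iff.mpr (Fin.pos_iff_nonempty.mp (hn (P + 2))))
        (fun i' => ∑ j, |W P i' j|) :=
      Finset.le_sup' (fun i' => ∑ j, |W P i' j|) (Finset.mem_univ i)
    calc |stack σ n W b (P+1) v i - stack σ n W b (P+1) v' i|
        ≤ C * ((∑ j, |W P i j|) * B) :=
          h1.trans (mul_le_mul_of_nonneg_left h2 hC)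
      _ ≤ C * (Finset.univ.sup'
            (Finset.univ_nonempty_iff.mpr (Fin.pos_iff_nonempty.mp (hn (P + 2))))
            (fun i' => ∑ j, |W P i' j|) * B) :=
          mul_le_mul_of_nonneg_left (mul_le_mul_of_nonneg_right h3 hBnn) hC
      _ = D * ∏ p ∈ Finset.range (P+1),
          (C * Finset.univ.sup'
            (Finset.univ_nonempty_iff.mpr (Fin.pos_iff_nonempty.mp (hn (p + 2))))
            (fun i' => ∑ j, |W p i' j|)) := by
          rw [Finset.prod_range_succ, hB]; ring

lemma first_layer {X : Type*} [MetricSpace X] (Mo Mn : Finset X)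
    (nnO nnN : X → X)
    (hNmem : ∀ m ∈ Mo, nnN m ∈ Mn)
    (We : X → ℝ) (u : X → ℝ) (δ : ℝ)
    (hcross : ∀ i ∈ Mo, ∀ j ∈ Mn, (nnO j = i ∨ nnN i = j) → |u i - u j| ≤ δ) :
    |(∑ j ∈ Mo, We j * u j) - ∑ k ∈ Mn,
        (∑ m ∈ Mo.filter (fun m => nnO k = m ∨ nnN m = k),
          We m / ((Mn.filter (fun h => nnO h = m ∨ nnN m = h)).card : ℝ)) * u k| ≤
      δ * ∑ j ∈ Mo, |We j| := by
  set T : X → Finset X := fun m => Mn.filter (fun h => nnO h = m ∨ nnN m = h) with hT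
  set c : X → ℝ := fun m => ((T m).card : ℝ) with hc
  have hcpos : ∀ m ∈ Mo, 0 < c m := by
    intro m hm
    have h1 : nnN m ∈ T m := Finset.mem_filter.mpr ⟨hNmem m hm, Or.inr rfl⟩
    exact Nat.cast_pos.mpr (Finset.card_pos.mpr ⟨_, h1⟩)
  have hswap : (∑ k ∈ Mn, (∑ m ∈ Mo.filter (fun m => nnO k = m ∨ nnN m = k),
        We m / c m) * u k) = ∑ m ∈ Mo, ∑ k ∈ T m, We m / c m * u k := by
    have h2 : ∀ k, (∑ m ∈ Mo.filter (fun m => nnO k = m ∨ nnN m = k),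
        We m / c m) * u k = ∑ m ∈ Mo, if nnO k = m ∨ nnN m = k then We m / c m * u k else 0 := by
      intro k
      rw [Finset.sum_mul, Finset.sum_filter]
    rw [Finset.sum_congr rfl fun k _ => h2 k, Finset.sum_comm]
    refine Finset.sum_congr rfl fun m _ => ?_
    rw [hT]
    rw [Finset.sum_filter]
  rw [hswap, ← Finset.sum_sub_distrib]
  refine le_trans (Finset.abs_sum_le_sum_abs _ _) ?_
  rw [Finset.mul_sum]
  refine Finset.sum_le_sum fun m hm => ?_
  have h0 : c m ≠ 0 := ne_of_gt (hcpos m hm)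
  have hconst : We m * u m = ∑ k ∈ T m, We m / c m * u m := by
    rw [Finset.sum_const, nsmul_eq_mul, (rfl : ((T m).card : ℝ) = c m)]
    field_simp
    rfl
  rw [hconst, ← Finset.sum_sub_distrib]
  refine le_trans (Finset.abs_sum_le_sum_abs _ _) ?_
  have hterm : ∀ k ∈ T m, |We m / c m * u m - We m / c m * u k| ≤ |We m| / c m * δ := by
    intro k hk
    have hk' := Finset.mem_filter.mp hk
    have := hcross m hm k hk'.1 hk'.2
    calc |We m / c m * u m - We m / c m * u k| = |We m / c m| * |u m - u k| := by
          rw [← abs_mul]; ring_nf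
      _ ≤ |We m| / c m * δ := by
          rw [abs_div, abs_of_pos (hcpos m hm)]
          exact mul_le_mul_of_nonneg_left this (by positivity)
  refine le_trans (Finset.sum_le_sum hterm) ?_
  rw [Finset.sum_const, nsmul_eq_mul, (rfl : ((T m).card : ℝ) = c m)]
  field_simp
  ring_nf
  rw [show ((T m).card : ℝ) = c m from rfl, mul_comm, ← mul_assoc, ← mul_assoc, inv_mul_cancel₀ h0, one_mul]

/-- Multi-layer mapper bound: with a GFN first layer followed by `P` standard
C-Lipschitz layers, an `α`-accurate mapper on `Mo` is
`(α + δ C^{P+1} ‖We‖_∞ Π_p ‖W^{(p)}‖_∞)`-accurate against the transformed encoder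
on `Mn`. -/
theorem gfn_multilayer_mapper_bound {X : Type*} [MetricSpace X] (Mo Mn : Finset X)
    (nnO nnN : X → X)
    (hO : ∀ j ∈ Mn, IsNN Mo j (nnO j))
    (hN : ∀ i ∈ Mo, IsNN Mn i (nnN i))
    (n : ℕ → ℕ) (hn : ∀ p, 0 < n p) (P : ℕ)
    (We : Fin (n 1) → X → ℝ) (be : Fin (n 1) → ℝ)
    (W : (p : ℕ) → Fin (n (p + 2)) → Fin (n (p + 1)) → ℝ)
    (b : (p : ℕ) → Fin (n (p + 2)) → ℝ)
    (σ : ℝ → ℝ) (C : ℝ) (hC : 0 ≤ C)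
    (hLip : ∀ a a', |σ a - σ a'| ≤ C * |a - a'|)
    (u : X → ℝ) (δ α : ℝ) (hδ : 0 ≤ δ) (hα : 0 ≤ α)
    (hcross : ∀ i ∈ Mo, ∀ j ∈ Mn, (nnO j = i ∨ nnN i = j) → |u i - u j| ≤ δ)
    (mapμ : Fin (n (P + 1)) → ℝ)
    (hmap : ∀ i, |mapμ i -
      stack σ n W b P (fun l => σ (∑ j ∈ Mo, We l j * u j + be l)) i| ≤ α) :
    ∀ i, |mapμ i -
      stack σ n W b P (fun l => σ (∑ k ∈ Mn,
        (∑ m ∈ Mo.filter (fun m => nnO k = m ∨ nnN m = k),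
          We l m / ((Mn.filter (fun h => nnO h = m ∨ nnN m = h)).card : ℝ)) * u k
        + be l)) i| ≤
      α + δ * C ^ (P + 1) *
        (Finset.univ.sup'
            (Finset.univ_nonempty_iff.mpr (Fin.pos_iff_nonempty.mp (hn 1)))
            fun l => ∑ j ∈ Mo, |We l j|) *
        ∏ p ∈ Finset.range P,
          Finset.univ.sup'
            (Finset.univ_nonempty_iff.mpr (Fin.pos_iff_nonempty.mp (hn (p + 2))))
            (fun i' => ∑ j, |W p i' j|) := by
  intro i
  set A : ℝ := Finset.univ.sup'
      (Finset.univ_nonempty_iff.mpr (Fin.pos_iff_nonempty.mp (hn 1)))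
      (fun l => ∑ j ∈ Mo, |We l j|) with hA
  have hAnn : (0:ℝ) ≤ A :=
    le_trans (Finset.sum_nonneg fun j _ => abs_nonneg _)
      (Finset.le_sup' (fun l => ∑ j ∈ Mo, |We l j|)
        (Finset.mem_univ (⟨0, hn 1⟩ : Fin (n 1))))
  set v : Fin (n 1) → ℝ := fun l => σ (∑ j ∈ Mo, We l j * u j + be l) with hv
  set v' : Fin (n 1) → ℝ := fun l => σ (∑ k ∈ Mn,
      (∑ m ∈ Mo.filter (fun m => nnO k = m ∨ nnN m = k),
        We l m / ((Mn.filter (fun h => nnO h = m ∨ nnN m = h)).card : ℝ)) * u k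
      + be l) with hv'
  have hvv' : ∀ l, |v l - v' l| ≤ C * (δ * A) := by
    intro l
    refine le_trans (hLip _ _) (mul_le_mul_of_nonneg_left ?_ hC)
    have heq : (∑ j ∈ Mo, We l j * u j + be l) - (∑ k ∈ Mn,
        (∑ m ∈ Mo.filter (fun m => nnO k = m ∨ nnN m = k),
          We l m / ((Mn.filter (fun h => nnO h = m ∨ nnN m = h)).card : ℝ)) * u k
        + be l) = (∑ j ∈ Mo, We l j * u j) - ∑ k ∈ Mn,
        (∑ m ∈ Mo.filter (fun m => nnO k = m ∨ nnN m = k),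
          We l m / ((Mn.filter (fun h => nnO h = m ∨ nnN m = h)).card : ℝ)) * u k := by
      ring
    rw [heq]
    refine le_trans (first_layer Mo Mn nnO nnN (fun m hm => (hN m hm).1)
      (We l) u δ hcross) ?_
    exact mul_le_mul_of_nonneg_left
      (Finset.le_sup' (fun l' => ∑ j ∈ Mo, |We l' j|) (Finset.mem_univ l)) hδ
  have hstk := stack_lip σ n hn W b C hC hLip (C * (δ * A))
    (mul_nonneg hC (mul_nonneg hδ hAnn)) P v v' hvv' i
  have htri : |mapμ i - stack σ n W b P v' i| ≤
      |mapμ i - stack σ n W b P v i| + |stack σ n W b P v i - stack σ n W b P v' i| := by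
    have := abs_sub_le (mapμ i) (stack σ n W b P v i) (stack σ n W b P v' i)
    simpa using this
  refine le_trans htri (le_trans (add_le_add (hmap i) hstk) (le_of_eq ?_))
  have hprod : (∏ p ∈ Finset.range P,
      (C * Finset.univ.sup'
        (Finset.univ_nonempty_iff.mpr (Fin.pos_iff_nonempty.mp (hn (p + 2))))
        (fun i' => ∑ j, |W p i' j|))) = C ^ P * ∏ p ∈ Finset.range P,
      Finset.univ.sup'
        (Finset.univ_nonempty_iff.mpr (Fin.pos_iff_nonempty.mp (hn (p + 2))))
        (fun i' => ∑ j, |W p i' j|) := by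
    rw [Finset.prod_mul_distrib, Finset.prod_const, Finset.card_range]
  rw [hprod]
  ring
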